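/- arXiv:1903.09444 — 2 statements merged into one kernel-verified Lean document; each statement's English description precedes it below -/
import Mathlib

section
/- If a perfect 2-coloring of Ci_∞(D_n) has positive outer degrees b, c with b + c = 2n, then its parameter matrix has equal rows, i.e., every vertex has exactly b neighbors of color white and 2n - b neighbors of color black, regardless of its own color. -/
/-- Neighborhood of `i` in the infinite circulant graph `Ci_∞(D_n)`,
`D_n = {±1, ±3, …, ±(2n-1)}`: the integers at odd distance less than `2n` from `i`. -/
noncomputable def nbrs (n : ℕ) (i : ℤ) : Finset ℤ :=
  (Finset.Icc (i - (2*(n:ℤ) - 1)) (i + (2*(n:ℤ) - 1))).filter (fun j => Odd (j - i))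

/-- `φ` is a perfect 2-coloring of `Ci_∞(D_n)` with outer degrees `(b, c)`:
every vertex of color 0 (black) has exactly `b` neighbors of color 1 (white), and
every vertex of color 1 has exactly `c` neighbors of color 0. -/
def Perfect2 (n : ℕ) (φ : ℤ → Fin 2) (b c : ℕ) : Prop :=
  (∀ i, φ i = 0 → ((nbrs n i).filter (fun j => φ j = 1)).card = b) ∧
  (∀ i, φ i = 1 → ((nbrs n i).filter (fun j => φ j = 0)).card = c)

lemma nbrs_card (n : ℕ) (i : ℤ) : (nbrs n i).card = 2*n := by
  have h : nbrs n i = (Finset.range (2*n)).image (fun k : ℕ => i - (2*(n:ℤ)-1) + 2*k) := by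
    ext j
    simp only [nbrs, Finset.mem_filter, Finset.mem_Icc, Finset.mem_image, Finset.mem_range,
      Int.odd_iff]
    constructor
    · rintro ⟨⟨h1, h2⟩, h3⟩
      refine ⟨((j - (i - (2*(n:ℤ)-1)))/2).toNat, ?_, ?_⟩ <;> omega
    · rintro ⟨k, hk, rfl⟩
      constructor <;> [constructor <;> omega; omega]
  rw [h, Finset.card_image_of_injective _ (fun a b hab => by omega), Finset.card_range]

/-- If `b + c = 2n`, every vertex has exactly `b` white and `2n - b` black
neighbors, regardless of its own color. -/
theorem sum_eq_two_n_equal_rows (n b c : ℕ) (hn : 0 < n) (hb : 0 < b) (hc : 0 < c)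
    (hbc : b + c = 2*n)
    (φ : ℤ → Fin 2) (hφ : Perfect2 n φ b c) :
    ∀ i : ℤ, ((nbrs n i).filter (fun j => φ j = 1)).card = b ∧
      ((nbrs n i).filter (fun j => φ j = 0)).card = 2*n - b := by
  obtain ⟨h0, h1⟩ := hφ
  intro i
  have hsplit : ((nbrs n i).filter (fun j => φ j = 1)).card +
      ((nbrs n i).filter (fun j => φ j = 0)).card = 2*n := by
    have heq : (nbrs n i).filter (fun j => φ j = 0)
        = (nbrs n i).filter (fun j => ¬ φ j = 1) := by
      apply Finset.filter_congr
      intro j _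
      exact (by decide : ∀ x : Fin 2, (x = 0 ↔ ¬ x = 1)) (φ j)
    rw [heq, Finset.card_filter_add_card_filter_not, nbrs_card]
  rcases (by decide : ∀ x : Fin 2, x = 0 ∨ x = 1) (φ i) with h | h
  · have := h0 i h
    omega
  · have := h1 i h
    omega
end

section
/- Every perfect non-bipartite 2-coloring of Ci_∞(D_n) whose outer degrees b, c satisfy b + c = 2n - 1 is periodic with period length 2n - 1, i.e., φ(i) = φ(i + 2n - 1) for all integers i. -/
/- ### Auxiliary machinery -/

private def gf (a : ℤ → ℚ) (n : ℕ) (x : ℤ) : ℚ := a (x + (2*(n:ℤ)-1)) - a x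

private def a2f (a : ℤ → ℚ) (n : ℕ) (x : ℤ) : ℚ :=
  -(1/2) * ∑ j ∈ Finset.range (2*n+1), (-1:ℚ)^j * gf a n (x + 2 + 2*(j:ℤ))

private lemma perz {f : ℤ → ℚ} {p : ℤ} (h : ∀ x, f (x + p) = f x) (t x : ℤ) :
    f (x + p * t) = f x := by
  induction t using Int.induction_on with
  | zero => simp
  | succ k ih =>
      have h2 := h (x + p * (k : ℤ))
      rw [show x + p * ((k : ℤ) + 1) = x + p * (k : ℤ) + p by ring, h2]
      exact ih
  | pred k ih =>
      have h2 := h (x + p * (-(k : ℤ) - 1))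
      rw [show x + p * (-(k : ℤ) - 1) + p = x + p * (-(k : ℤ)) by ring] at h2
      rw [← h2]
      exact ih

private lemma odd_dvd_eight {d : ℕ} (h8 : d ∣ 8) (hodd : ¬ (2 ∣ d)) : d = 1 := by
  have hle := Nat.le_of_dvd (by norm_num) h8
  interval_cases d <;> omega

private lemma hcop (n : ℕ) : IsCoprime ((2*(n:ℤ)-1)) (4*(n:ℤ)+2) := by
  rw [Int.isCoprime_iff_gcd_eq_one]
  have h1 : ((Int.gcd (2*(n:ℤ)-1) (4*(n:ℤ)+2) : ℤ)) ∣ (2*(n:ℤ)-1) := Int.gcd_dvd_left _ _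
  have h2 : ((Int.gcd (2*(n:ℤ)-1) (4*(n:ℤ)+2) : ℤ)) ∣ (4*(n:ℤ)+2) := Int.gcd_dvd_right _ _
  have h8 : ((Int.gcd (2*(n:ℤ)-1) (4*(n:ℤ)+2) : ℤ)) ∣ 8 := by
    have := dvd_sub (h2.mul_left 2) (h1.mul_left 4)
    rwa [show (2*(4*(n:ℤ)+2) - 4*(2*(n:ℤ)-1)) = 8 by ring] at this
  have h8' : Int.gcd (2*(n:ℤ)-1) (4*(n:ℤ)+2) ∣ 8 := by exact_mod_cast h8
  refine odd_dvd_eight h8' ?_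
  intro h2d
  have : (2:ℤ) ∣ (2*(n:ℤ)-1) := dvd_trans (by exact_mod_cast h2d) h1
  omega

section
variable {n b : ℕ} {a : ℤ → ℚ}

private lemma hR (hE : ∀ i : ℤ, ∑ j ∈ Finset.range (2*n), a (i - (2*(n:ℤ)-1) + 2*(j:ℤ)) = (b:ℚ) + a i)
    (i : ℤ) : a (i + (2*(n:ℤ)-1) + 2) + a i = a (i + 2) + a (i - (2*(n:ℤ)-1)) := by
  have h1 := hE i
  have h2 := hE (i + 2)
  have e1 : (∑ j ∈ Finset.range (2*n), a (i + 2 - (2*(n:ℤ)-1) + 2*(j:ℤ)))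
      = ∑ j ∈ Finset.range (2*n), a (i - (2*(n:ℤ)-1) + 2*(((j+1 : ℕ)):ℤ)) :=
    Finset.sum_congr rfl (fun j _ => by congr 1; push_cast; ring)
  have e2 := Finset.sum_range_succ' (fun j : ℕ => a (i - (2*(n:ℤ)-1) + 2*(j:ℤ))) (2*n)
  have e3 := Finset.sum_range_succ (fun j : ℕ => a (i - (2*(n:ℤ)-1) + 2*(j:ℤ))) (2*n)
  have e4 : a (i - (2*(n:ℤ)-1) + 2*(((2*n : ℕ)):ℤ)) = a (i + (2*(n:ℤ)-1) + 2) := by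
    congr 1; push_cast; ring
  have e5 : a (i - (2*(n:ℤ)-1) + 2*(((0 : ℕ)):ℤ)) = a (i - (2*(n:ℤ)-1)) := by
    congr 1; push_cast; ring
  rw [e1] at h2
  rw [e4] at e3
  rw [e5] at e2
  linarith

private lemma hganti (hRh : ∀ i : ℤ, a (i + (2*(n:ℤ)-1) + 2) + a i = a (i + 2) + a (i - (2*(n:ℤ)-1)))
    (x : ℤ) : gf a n (x + (2*(n:ℤ)+1)) = - gf a n x := by
  have h := hRh (x + (2*(n:ℤ)-1))
  simp only [gf]
  rw [show x + (2*(n:ℤ)+1) + (2*(n:ℤ)-1) = x + (2*(n:ℤ)-1) + (2*(n:ℤ)-1) + 2 by ring,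
      show x + (2*(n:ℤ)+1) = x + (2*(n:ℤ)-1) + 2 by ring]
  rw [show x + (2*(n:ℤ)-1) - (2*(n:ℤ)-1) = x by ring] at h
  linarith

private lemma hgper (hga : ∀ x : ℤ, gf a n (x + (2*(n:ℤ)+1)) = - gf a n x)
    (x : ℤ) : gf a n (x + (4*(n:ℤ)+2)) = gf a n x := by
  have h1 := hga (x + (2*(n:ℤ)+1))
  have h2 := hga x
  rw [show x + (2*(n:ℤ)+1) + (2*(n:ℤ)+1) = x + (4*(n:ℤ)+2) by ring] at h1
  linarith

private lemma ha2anti (hga : ∀ x : ℤ, gf a n (x + (2*(n:ℤ)+1)) = - gf a n x)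
    (x : ℤ) : a2f a n (x + (2*(n:ℤ)+1)) = - a2f a n x := by
  simp only [a2f]
  have e : ∀ j ∈ Finset.range (2*n+1), (-1:ℚ)^j * gf a n (x + (2*(n:ℤ)+1) + 2 + 2*(j:ℤ))
      = -((-1:ℚ)^j * gf a n (x + 2 + 2*(j:ℤ))) := by
    intro j _
    rw [show x + (2*(n:ℤ)+1) + 2 + 2*(j:ℤ) = (x + 2 + 2*(j:ℤ)) + (2*(n:ℤ)+1) by ring, hga]
    ring
  rw [Finset.sum_congr rfl e, Finset.sum_neg_distrib]
  ring

private lemma ha2per (hgp : ∀ x : ℤ, gf a n (x + (4*(n:ℤ)+2)) = gf a n x)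
    (x : ℤ) : a2f a n (x + (4*(n:ℤ)+2)) = a2f a n x := by
  simp only [a2f]
  congr 1
  refine Finset.sum_congr rfl (fun j _ => ?_)
  rw [show x + (4*(n:ℤ)+2) + 2 + 2*(j:ℤ) = (x + 2 + 2*(j:ℤ)) + (4*(n:ℤ)+2) by ring, hgp]

private lemma ha2m (hga : ∀ x : ℤ, gf a n (x + (2*(n:ℤ)+1)) = - gf a n x)
    (hgp : ∀ x : ℤ, gf a n (x + (4*(n:ℤ)+2)) = gf a n x)
    (x : ℤ) : a2f a n (x + (2*(n:ℤ)-1)) - a2f a n x = gf a n x := by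
  have tele := Finset.sum_range_sub' (fun j : ℕ => (-1:ℚ)^j * gf a n (x + 2*(j:ℤ))) (2*n+1)
  have hterm : ∀ j ∈ Finset.range (2*n+1),
      ((-1:ℚ)^j * gf a n (x + (2*(n:ℤ)-1) + 2 + 2*(j:ℤ)) - (-1:ℚ)^j * gf a n (x + 2 + 2*(j:ℤ)))
      = -(((-1:ℚ)^j * gf a n (x + 2*(j:ℤ))) - ((-1:ℚ)^(j+1) * gf a n (x + 2*(((j+1:ℕ)):ℤ)))) := by
    intro j _
    rw [show x + (2*(n:ℤ)-1) + 2 + 2*(j:ℤ) = (x + 2*(j:ℤ)) + (2*(n:ℤ)+1) by ring, hga]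
    rw [show x + 2*(((j+1:ℕ)):ℤ) = x + 2 + 2*(j:ℤ) by push_cast; ring]
    rw [pow_succ]
    ring
  have hF0 : (-1:ℚ)^(0:ℕ) * gf a n (x + 2*((0:ℕ):ℤ)) = gf a n x := by
    norm_num
  have hFN : (-1:ℚ)^(2*n+1) * gf a n (x + 2*(((2*n+1 : ℕ)):ℤ)) = - gf a n x := by
    rw [show x + 2*(((2*n+1 : ℕ)):ℤ) = x + (4*(n:ℤ)+2) by push_cast; ring, hgp]
    rw [Odd.neg_one_pow ⟨n, by ring⟩]
    ring
  have hcomb : (∑ j ∈ Finset.range (2*n+1), (-1:ℚ)^j * gf a n (x + (2*(n:ℤ)-1) + 2 + 2*(j:ℤ)))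
      - (∑ j ∈ Finset.range (2*n+1), (-1:ℚ)^j * gf a n (x + 2 + 2*(j:ℤ)))
      = -((∑ j ∈ Finset.range (2*n+1),
          (((-1:ℚ)^j * gf a n (x + 2*(j:ℤ))) - ((-1:ℚ)^(j+1) * gf a n (x + 2*(((j+1:ℕ)):ℤ)))))) := by
    rw [← Finset.sum_sub_distrib, Finset.sum_congr rfl hterm, Finset.sum_neg_distrib]
  rw [hF0, hFN] at tele
  simp only [a2f]
  linarith [tele, hcomb]

private lemma core
    (h01 : ∀ i, a i = 0 ∨ a i = 1)
    (hE : ∀ i : ℤ, ∑ j ∈ Finset.range (2*n), a (i - (2*(n:ℤ)-1) + 2*(j:ℤ)) = (b:ℚ) + a i) :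
    ∀ i, a (i + (2*(n:ℤ)-1)) = a i := by
  have hRh := hR hE
  have hga := fun x => hganti hRh x
  have hgp := fun x => hgper hga x
  have h2a := fun x => ha2anti hga x
  have h2p := fun x => ha2per hgp x
  have h2m := fun x => ha2m hga hgp x
  obtain ⟨u, v, huv⟩ := hcop n
  have ha1per : ∀ x : ℤ, (fun y => a y - a2f a n y) (x + (2*(n:ℤ)-1)) = (fun y => a y - a2f a n y) x := by
    intro x
    have h1 := h2m x
    simp only [gf] at h1
    simp only []
    linarith
  have hkey : ∀ i r : ℤ, (a i - a2f a n i) + a2f a n r = 0 ∨ (a i - a2f a n i) + a2f a n r = 1 := by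
    intro i r
    have h1 : a (i + (2*(n:ℤ)-1) * (u * (r - i))) - a2f a n (i + (2*(n:ℤ)-1) * (u * (r - i)))
        = a i - a2f a n i :=
      perz (f := fun y => a y - a2f a n y) ha1per (u*(r-i)) i
    have hx2 : i + (2*(n:ℤ)-1) * (u * (r - i)) = r + (4*(n:ℤ)+2) * (v * (i - r)) := by
      linear_combination (r - i) * huv
    have h2 : a2f a n (i + (2*(n:ℤ)-1) * (u * (r - i))) = a2f a n r := by
      rw [hx2]
      exact perz h2p (v*(i-r)) r
    rcases h01 (i + (2*(n:ℤ)-1) * (u * (r - i))) with h|h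
    · left; rw [← h1, ← h2]; linarith
    · right; rw [← h1, ← h2]; linarith
  have hSne : ((Finset.range (4*n+2)).image (fun j : ℕ => a2f a n (j:ℤ))).Nonempty :=
    ⟨a2f a n ((0:ℕ):ℤ), Finset.mem_image.mpr ⟨0, Finset.mem_range.mpr (by omega), rfl⟩⟩
  obtain ⟨j0, hj0r, hj0⟩ := Finset.mem_image.mp (Finset.max'_mem _ hSne)
  set δ := Finset.max' _ hSne with hδdef
  have hub : ∀ r : ℤ, a2f a n r ≤ δ := by
    intro r
    have hq1 : 0 ≤ r % (4*(n:ℤ)+2) := Int.emod_nonneg r (by omega)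
    have hq2 : r % (4*(n:ℤ)+2) < 4*(n:ℤ)+2 := Int.emod_lt_of_pos r (by omega)
    have e : a2f a n r = a2f a n (((r % (4*(n:ℤ)+2)).toNat : ℤ)) := by
      conv_lhs => rw [show r = (r % (4*(n:ℤ)+2)) + (4*(n:ℤ)+2) * (r / (4*(n:ℤ)+2)) from
        (Int.emod_add_mul_ediv r (4*(n:ℤ)+2)).symm]
      rw [perz h2p (r / (4*(n:ℤ)+2)) (r % (4*(n:ℤ)+2))]
      congr 1
      omega
    rw [e, hδdef]
    have hmem : a2f a n (((r % (4*(n:ℤ)+2)).toNat : ℕ) : ℤ)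
        ∈ (Finset.range (4*n+2)).image (fun j : ℕ => a2f a n (j:ℤ)) :=
      Finset.mem_image.mpr ⟨(r % (4*(n:ℤ)+2)).toNat, Finset.mem_range.mpr (by omega), rfl⟩
    exact Finset.le_max' _ _ hmem
  have hδ0 : 0 ≤ δ := by
    have h1 := hub ((j0:ℤ) + (2*(n:ℤ)+1))
    rw [h2a, hj0] at h1
    linarith
  have hc1 := hkey 0 (j0:ℤ)
  have hc2 := hkey 0 ((j0:ℤ) + (2*(n:ℤ)+1))
  rw [h2a, hj0] at hc2
  rw [hj0] at hc1
  have hδval : δ = 0 ∨ δ = 1/2 := by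
    rcases hc1 with h|h <;> rcases hc2 with h'|h' <;>
      first | (left; linarith) | (right; linarith)
  rcases hδval with hδv | hδv
  · have hz : ∀ r : ℤ, a2f a n r = 0 := by
      intro r
      have h1 := hub r
      have h2 := hub (r + (2*(n:ℤ)+1))
      rw [h2a] at h2
      rw [hδv] at h1 h2
      linarith
    intro i
    have h := h2m i
    rw [hz, hz] at h
    simp only [gf] at h
    linarith
  · exfalso
    have ha1half : ∀ i : ℤ, a i - a2f a n i = 1/2 := by
      intro i
      have h1 := hkey i (j0:ℤ)
      have h2 := hkey i ((j0:ℤ) + (2*(n:ℤ)+1))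
      rw [h2a, hj0] at h2
      rw [hj0] at h1
      rw [hδv] at h1 h2
      rcases h1 with h|h <;> rcases h2 with h'|h' <;> linarith
    have hflip : ∀ x : ℤ, a (x + (2*(n:ℤ)+1)) = 1 - a x := by
      intro x
      have h1 := ha1half x
      have h2 := ha1half (x + (2*(n:ℤ)+1))
      have h3 := h2a x
      linarith
    have hE0 := hE 0
    have hEs := hE (2*(n:ℤ)+1)
    have hterm : ∀ j ∈ Finset.range (2*n),
        a ((2*(n:ℤ)+1) - (2*(n:ℤ)-1) + 2*(j:ℤ)) = 1 - a ((0:ℤ) - (2*(n:ℤ)-1) + 2*(j:ℤ)) := by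
      intro j _
      rw [show (2*(n:ℤ)+1) - (2*(n:ℤ)-1) + 2*(j:ℤ)
          = ((0:ℤ) - (2*(n:ℤ)-1) + 2*(j:ℤ)) + (2*(n:ℤ)+1) by ring]
      exact hflip _
    rw [Finset.sum_congr rfl hterm, Finset.sum_sub_distrib, Finset.sum_const,
      Finset.card_range, hE0] at hEs
    have hs2 := hflip 0
    rw [show (0:ℤ) + (2*(n:ℤ)+1) = 2*(n:ℤ)+1 by ring] at hs2
    rw [hs2] at hEs
    simp only [nsmul_eq_mul, mul_one] at hEs
    push_cast at hEs
    have hq : (2*n : ℕ) = 2*b+1 := by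
      have : ((2*n : ℕ) : ℚ) = ((2*b+1 : ℕ) : ℚ) := by push_cast; linarith
      exact_mod_cast this
    omega

end

private lemma nbrs_eq_image (n : ℕ) (i : ℤ) :
    nbrs n i = (Finset.range (2*n)).image (fun j : ℕ => i - (2*(n:ℤ)-1) + 2*(j:ℤ)) := by
  ext x
  simp only [nbrs, Finset.mem_filter, Finset.mem_Icc, Finset.mem_image, Finset.mem_range]
  constructor
  · rintro ⟨⟨hl, hr⟩, t, ht⟩
    exact ⟨(t + n).toNat, by omega, by omega⟩
  · rintro ⟨j, hj, rfl⟩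
    exact ⟨⟨by omega, by omega⟩, ⟨(j:ℤ) - n, by omega⟩⟩

private lemma sum_eq (n b c : ℕ) (hn : 0 < n) (hb : 0 < b) (hc : 0 < c)
    (hbc : b + c = 2*n - 1)
    (φ : ℤ → Fin 2) (hφ : Perfect2 n φ b c) :
    ∀ i : ℤ, ∑ j ∈ Finset.range (2*n), (((φ (i - (2*(n:ℤ)-1) + 2*(j:ℤ))).val : ℚ))
      = (b:ℚ) + ((φ i).val : ℚ) := by
  intro i
  have hvals : ∀ v : Fin 2, v = 0 ∨ v = 1 := by decide
  have hinj : Function.Injective (fun j : ℕ => i - (2*(n:ℤ)-1) + 2*(j:ℤ)) := by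
    intro p q h
    simp only [] at h
    omega
  have hsum : ∑ x ∈ nbrs n i, ((φ x).val : ℚ)
      = ∑ j ∈ Finset.range (2*n), ((φ (i - (2*(n:ℤ)-1) + 2*(j:ℤ))).val : ℚ) := by
    rw [nbrs_eq_image n i]
    exact Finset.sum_image (fun p _ q _ h => hinj h)
  have hbool : ∑ x ∈ nbrs n i, ((φ x).val : ℚ)
      = (((nbrs n i).filter (fun x => φ x = 1)).card : ℚ) := by
    rw [Finset.card_filter]
    push_cast
    refine Finset.sum_congr rfl (fun x _ => ?_)
    rcases hvals (φ x) with h|h <;> simp [h]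
  have hcard : (nbrs n i).card = 2*n := by
    rw [nbrs_eq_image n i, Finset.card_image_of_injective _ hinj, Finset.card_range]
  rcases hvals (φ i) with h|h
  · rw [← hsum, hbool, hφ.1 i h, h]
    norm_num
  · have hc' := hφ.2 i h
    have hpart : ((nbrs n i).filter (fun x => φ x = 1)).card
        + ((nbrs n i).filter (fun x => φ x = 0)).card = 2*n := by
      rw [← hcard]
      rw [show ((nbrs n i).filter (fun x => φ x = 0))
          = ((nbrs n i).filter (fun x => ¬ φ x = 1)) from
        Finset.filter_congr (fun x _ => by
          constructor
          · intro hx; rw [hx]; decide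
          · intro hx; rcases hvals (φ x) with h'|h' <;> simp_all)]
      exact Finset.card_filter_add_card_filter_not _
    have hw : ((nbrs n i).filter (fun x => φ x = 1)).card = b + 1 := by omega
    rw [← hsum, hbool, hw, h]
    push_cast [Fin.val_one]
    ring

/-- Every perfect non-bipartite 2-coloring with `b + c = 2n-1` has period `2n-1`. -/
theorem period_minus (n b c : ℕ) (hn : 0 < n) (hb : 0 < b) (hc : 0 < c)
    (hbc : b + c = 2*n - 1)
    (φ : ℤ → Fin 2) (hφ : Perfect2 n φ b c)
    (hnonbip : ¬ (∀ i j : ℤ, Even i → Odd j → φ i ≠ φ j)) :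
    ∀ i : ℤ, φ (i + (2*(n:ℤ) - 1)) = φ i := by
  intro i
  have hEq := sum_eq n b c hn hb hc hbc φ hφ
  have h01 : ∀ x : ℤ, ((φ x).val : ℚ) = 0 ∨ ((φ x).val : ℚ) = 1 := by
    intro x
    rcases (show ∀ v : Fin 2, v = 0 ∨ v = 1 by decide) (φ x) with h|h <;>
      [left; right] <;> rw [h] <;> norm_num
  have key := core (n := n) (b := b) (a := fun x : ℤ => ((φ x).val : ℚ)) h01 hEq i
  have hval : (φ (i + (2*(n:ℤ)-1))).val = (φ i).val := by exact_mod_cast key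
  exact Fin.val_injective hval
end
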